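/- Let U ∈ ℝ^{N×L} with U Uᵀ = Id_N, write U = (V_k W_k) with V_k ∈ ℝ^{N×k}, W_k ∈ ℝ^{N×(L−k)}, k ≤ L−N, V_k and W_k full rank. For 0 ≤ j ≤ min(k,N), define C_j ∈ ℝ^{binom(k,j) × binom(L−k, N−j)} with entries (C_j)_{σ,ρ} = det(U_{σ ∪ (k+ρ)}) for σ a j-subset of {1,...,k} and ρ an (N−j)-subset of {1,...,L−k} (columns in increasing order). Then C_j C_jᵀ = det(W_k W_kᵀ) · Λ^j(V_kᵀ (W_k W_kᵀ)^{-1} V_k), where Λ^j denotes the j-th compound matrix. -/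

import Mathlib

open Matrix

noncomputable def eigsDesc {n : ℕ} {A : Matrix (Fin n) (Fin n) ℝ} (hA : A.IsHermitian) : Fin n → ℝ :=
  fun i => (hA.eigenvalues ∘ Tuple.sort hA.eigenvalues) i.rev

noncomputable def svDesc {m n : ℕ} (A : Matrix (Fin m) (Fin n) ℝ) : Fin n → ℝ :=
  fun i => Real.sqrt (eigsDesc (Matrix.isHermitian_conjTranspose_mul_self A) i)

noncomputable def slaterEntry {N L : ℕ} (U : Matrix (Fin N) (Fin L) ℝ) (o : Fin L → Bool) : ℝ :=
  if h : (Finset.univ.filter fun p => o p = true).card = N then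
    (U.submatrix id ((Finset.univ.filter fun p => o p = true).orderEmbOfFin h)).det
  else 0

noncomputable def compound {k : ℕ} (j : ℕ) (A : Matrix (Fin k) (Fin k) ℝ) :
    Matrix {s : Finset (Fin k) // s.card = j} {s : Finset (Fin k) // s.card = j} ℝ :=
  fun σ τ => (A.submatrix (σ.1.orderEmbOfFin σ.2) (τ.1.orderEmbOfFin τ.2)).det

def IsEigenvalue {ι : Type*} [Fintype ι] (M : Matrix ι ι ℝ) (lam : ℝ) : Prop :=
  ∃ v : ι → ℝ, v ≠ 0 ∧ M.mulVec v = lam • v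

noncomputable def slaterReshape {N L : ℕ} (U : Matrix (Fin N) (Fin L) ℝ) (k : ℕ) :
    Matrix (Fin (2 ^ k)) (Fin (2 ^ (L - k))) ℝ :=
  fun a b => slaterEntry U fun p =>
    if p.val < k then a.val.testBit p.val else b.val.testBit (p.val - k)

def leftBlock {N L : ℕ} (U : Matrix (Fin N) (Fin L) ℝ) (k : ℕ) (hk : k ≤ L) :
    Matrix (Fin N) (Fin k) ℝ :=
  U.submatrix id (fun i => Fin.castLE hk i)

def rightBlock {N L : ℕ} (U : Matrix (Fin N) (Fin L) ℝ) (k : ℕ) :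
    Matrix (Fin N) (Fin (L - k)) ℝ :=
  U.submatrix id (fun i => ⟨k + i.val, by have := i.isLt; omega⟩)

def shiftEmb (k L : ℕ) : Fin (L - k) ↪ Fin L :=
  ⟨fun i => ⟨k + i.val, by have := i.isLt; omega⟩, by
    intro a b h
    have : k + a.val = k + b.val := congrArg Fin.val h
    exact Fin.ext (by omega)⟩

noncomputable def Cmat {N L : ℕ} (k : ℕ) (hk : k ≤ L) (U : Matrix (Fin N) (Fin L) ℝ) (j : ℕ) :
    Matrix {s : Finset (Fin k) // s.card = j} {s : Finset (Fin (L - k)) // s.card = N - j} ℝ :=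
  fun σ ρ => slaterEntry U fun p =>
    decide (p ∈ σ.1.map (Fin.castLEEmb hk) ∪ ρ.1.map (shiftEmb k L))

def blockSym {m n : ℕ} (A : Matrix (Fin m) (Fin n) ℝ) : Matrix (Fin (m + n)) (Fin (m + n)) ℝ :=
  (Matrix.fromBlocks 0 A Aᵀ 0).submatrix finSumFinEquiv.symm finSumFinEquiv.symm


namespace CmatAux
open Finset Equiv Polynomial

variable {R : Type*} [CommRing R]

theorem det_submatrix_comp_perm {n m : ℕ} (A : Matrix (Fin n) (Fin m) R)
    (e : Fin n → Fin m) (g : Equiv.Perm (Fin n)) :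
    (A.submatrix id (e ∘ g)).det = (Perm.sign g : ℤ) * (A.submatrix id e).det := by
  have h : A.submatrix id (e ∘ g) = (A.submatrix id e).submatrix id g := rfl
  rw [h, Matrix.det_permute']

theorem det_submatrix_eq_sum_perm {n m : ℕ} (B : Matrix (Fin n) (Fin m) R)
    (e : Fin n → Fin m) :
    (B.submatrix id e).det =
      ∑ g : Perm (Fin n), ((Perm.sign g : ℤ) : R) * ∏ i, B i (e (g i)) := by
  rw [← Matrix.det_transpose, Matrix.det_apply']
  rfl

theorem cauchyBinet {n m : ℕ} (A B : Matrix (Fin n) (Fin m) R) :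
    (A * Bᵀ).det = ∑ S : {s : Finset (Fin m) // s.card = n},
      (A.submatrix id (S.1.orderEmbOfFin S.2)).det *
        (B.submatrix id (S.1.orderEmbOfFin S.2)).det := by
  classical
  have hdet0 : ∀ p : Fin n → Fin m, ¬ Function.Injective p →
      (A.submatrix id p).det = 0 := by
    intro p hp
    rw [Function.not_injective_iff] at hp
    obtain ⟨i, i', hval, hne⟩ := hp
    exact Matrix.det_zero_of_column_eq hne (fun k => by simp [hval])
  have h1 : (A * Bᵀ).det
      = ∑ p : Fin n → Fin m, (∏ i, B i (p i)) * (A.submatrix id p).det := by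
    calc (A * Bᵀ).det
        = ∑ σ : Perm (Fin n), ∑ p : Fin n → Fin m,
            ((Perm.sign σ : ℤ) : R) * ∏ i, A (σ i) (p i) * B i (p i) := by
          simp only [Matrix.det_apply', Matrix.mul_apply, Matrix.transpose_apply,
            prod_univ_sum, mul_sum, Fintype.piFinset_univ]
      _ = ∑ p : Fin n → Fin m, ∑ σ : Perm (Fin n),
            ((Perm.sign σ : ℤ) : R) * ∏ i, A (σ i) (p i) * B i (p i) := Finset.sum_comm
      _ = ∑ p : Fin n → Fin m, (∏ i, B i (p i)) * (A.submatrix id p).det := by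
          refine Finset.sum_congr rfl fun p _ => ?_
          rw [Matrix.det_apply', Finset.mul_sum]
          refine Finset.sum_congr rfl fun σ _ => ?_
          simp only [Matrix.submatrix_apply, id_eq, Finset.prod_mul_distrib]
          ring
  rw [h1]
  have key : ∑ Sg : {s : Finset (Fin m) // s.card = n} × Perm (Fin n),
      (∏ i, B i (Sg.1.1.orderEmbOfFin Sg.1.2 (Sg.2 i))) *
        (A.submatrix id (Sg.1.1.orderEmbOfFin Sg.1.2 ∘ Sg.2)).det
      = ∑ p : Fin n → Fin m, (∏ i, B i (p i)) * (A.submatrix id p).det := by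
    refine Finset.sum_bij_ne_zero (fun Sg _ _ => Sg.1.1.orderEmbOfFin Sg.1.2 ∘ Sg.2)
      (fun _ _ _ => Finset.mem_univ _) ?_ ?_ ?_
    · rintro ⟨S, g⟩ h1' h2' ⟨T, h⟩ h3' h4' heq
      have heq' : (S.1.orderEmbOfFin S.2) ∘ g = (T.1.orderEmbOfFin T.2) ∘ h := heq
      have hST : S.1 = T.1 := by
        have : Set.range (S.1.orderEmbOfFin S.2 ∘ g) = Set.range (T.1.orderEmbOfFin T.2 ∘ h) := by
          rw [heq']
        rw [Set.range_comp, Set.range_comp, g.range_eq_univ, h.range_eq_univ,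
          Set.image_univ, Set.image_univ, Finset.range_orderEmbOfFin,
          Finset.range_orderEmbOfFin] at this
        exact_mod_cast this
      have hS : S = T := Subtype.ext hST
      subst hS
      have hg : g = h :=
        Equiv.ext fun i => (S.1.orderEmbOfFin S.2).injective (congrFun heq' i)
      rw [hg]
    · intro p _ hpne
      have hinj : Function.Injective p := by
        by_contra hni
        exact hpne (by rw [hdet0 p hni, mul_zero])
      set S : Finset (Fin m) := Finset.univ.image p with hSdef
      have hS : S.card = n := by
        rw [hSdef, Finset.card_image_of_injective _ hinj, Finset.card_univ, Fintype.card_fin]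
      have hmem : ∀ i, ∃ c, S.orderEmbOfFin hS c = p i := by
        intro i
        have : p i ∈ S := Finset.mem_image.2 ⟨i, Finset.mem_univ i, rfl⟩
        have : p i ∈ Set.range (S.orderEmbOfFin hS) := by
          rw [Finset.range_orderEmbOfFin]; exact_mod_cast this
        exact this
      choose u hu using hmem
      have huinj : Function.Injective u := by
        intro a b hab
        apply hinj
        rw [← hu a, ← hu b, hab]
      have hubij : Function.Bijective u := Finite.injective_iff_bijective.1 huinj
      refine ⟨⟨⟨S, hS⟩, Equiv.ofBijective u hubij⟩, Finset.mem_univ _, ?_, ?_⟩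
      · have hcomp : (S.orderEmbOfFin hS ∘ Equiv.ofBijective u hubij) = p := by
          funext i; exact hu i
        simpa [hcomp, hu, show (S.orderEmbOfFin hS ∘ u) = p from funext hu] using hpne
      · funext i; exact hu i
    · rintro ⟨S, g⟩ _ _
      rfl
  rw [← key, Fintype.sum_prod_type]
  refine Finset.sum_congr rfl fun S _ => ?_
  have : ∀ g : Perm (Fin n),
      (∏ i, B i (S.1.orderEmbOfFin S.2 (g i))) *
        (A.submatrix id (S.1.orderEmbOfFin S.2 ∘ g)).det
      = (A.submatrix id (S.1.orderEmbOfFin S.2)).det *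
        (((Perm.sign g : ℤ) : R) * ∏ i, B i (S.1.orderEmbOfFin S.2 (g i))) := by
    intro g
    rw [det_submatrix_comp_perm]
    ring
  rw [Finset.sum_congr rfl fun g _ => this g, ← Finset.mul_sum,
    ← det_submatrix_eq_sum_perm]

theorem disjoint_union_map {A a b : ℕ} (e₁ : Fin a ↪ Fin A) (e₂ : Fin b ↪ Fin A)
    (hsep : ∀ x y, e₁ x < e₂ y) (s₁ : Finset (Fin a)) (s₂ : Finset (Fin b)) :
    Disjoint (s₁.map e₁) (s₂.map e₂) := by
  rw [Finset.disjoint_left]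
  intro x hx1 hx2
  obtain ⟨u, _, rfl⟩ := Finset.mem_map.1 hx1
  obtain ⟨v, _, hv⟩ := Finset.mem_map.1 hx2
  exact (hsep u v).ne' hv

theorem card_union_map {A a b : ℕ} (e₁ : Fin a ↪ Fin A) (e₂ : Fin b ↪ Fin A)
    (hsep : ∀ x y, e₁ x < e₂ y) (s₁ : Finset (Fin a)) (s₂ : Finset (Fin b)) :
    (s₁.map e₁ ∪ s₂.map e₂).card = s₁.card + s₂.card := by
  rw [Finset.card_union_of_disjoint (disjoint_union_map e₁ e₂ hsep s₁ s₂),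
    Finset.card_map, Finset.card_map]

theorem orderEmbOfFin_union_map {A a b N j : ℕ} (hj : j ≤ N)
    (e₁ : Fin a ↪ Fin A) (e₂ : Fin b ↪ Fin A)
    (he₁ : StrictMono e₁) (he₂ : StrictMono e₂)
    (hsep : ∀ x y, e₁ x < e₂ y)
    (s₁ : Finset (Fin a)) (s₂ : Finset (Fin b)) (h1 : s₁.card = j) (h2 : s₂.card = N - j)
    (hcard : (s₁.map e₁ ∪ s₂.map e₂).card = N) (i : Fin N) :
    (s₁.map e₁ ∪ s₂.map e₂).orderEmbOfFin hcard i =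
      if h : i.val < j then e₁ (s₁.orderEmbOfFin h1 ⟨i.val, h⟩)
      else e₂ (s₂.orderEmbOfFin h2 ⟨i.val - j, by have := i.isLt; omega⟩) := by
  have key := Finset.orderEmbOfFin_unique hcard
    (f := fun i : Fin N => if h : i.val < j then e₁ (s₁.orderEmbOfFin h1 ⟨i.val, h⟩)
      else e₂ (s₂.orderEmbOfFin h2 ⟨i.val - j, by have := i.isLt; omega⟩)) ?_ ?_
  · exact (congrFun key i).symm
  · intro x
    by_cases h : x.val < j
    · rw [dif_pos h]
      exact Finset.mem_union_left _ (Finset.mem_map_of_mem _ (Finset.orderEmbOfFin_mem _ _ _))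
    · rw [dif_neg h]
      exact Finset.mem_union_right _ (Finset.mem_map_of_mem _ (Finset.orderEmbOfFin_mem _ _ _))
  · intro x y hxy
    dsimp only
    by_cases hx : x.val < j
    · by_cases hy : y.val < j
      · rw [dif_pos hx, dif_pos hy]
        refine he₁ ((s₁.orderEmbOfFin h1).strictMono ?_)
        rw [Fin.lt_def] at hxy ⊢
        exact hxy
      · rw [dif_pos hx, dif_neg hy]
        exact hsep _ _
    · have hy : ¬ y.val < j := by have := hxy; rw [Fin.lt_def] at this; omega
      rw [dif_neg hx, dif_neg hy]
      refine he₂ ((s₂.orderEmbOfFin h2).strictMono ?_)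
      rw [Fin.lt_def] at hxy ⊢
      simp only []
      omega

theorem card_filter_orderEmb {A n : ℕ} (S : Finset (Fin A)) (h : S.card = n)
    (P : Fin A → Prop) [DecidablePred P] :
    (Finset.univ.filter fun c : Fin n => P (S.orderEmbOfFin h c)).card
      = (S.filter P).card := by
  refine Finset.card_bij (fun c _ => S.orderEmbOfFin h c) ?_ ?_ ?_
  · intro c hc
    rw [Finset.mem_filter] at hc ⊢
    exact ⟨Finset.orderEmbOfFin_mem _ _ _, hc.2⟩
  · intro c _ c' _ hcc
    exact (S.orderEmbOfFin h).injective hcc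
  · intro x hx
    rw [Finset.mem_filter] at hx
    have : x ∈ Set.range (S.orderEmbOfFin h) := by
      rw [Finset.range_orderEmbOfFin]; exact_mod_cast hx.1
    obtain ⟨c, hc⟩ := this
    exact ⟨c, Finset.mem_filter.2 ⟨Finset.mem_univ _, by rw [hc]; exact hx.2⟩, hc⟩

theorem isUnit_det_self_mul_transpose {N m : ℕ} (W : Matrix (Fin N) (Fin m) ℝ)
    (h : W.rank = N) : IsUnit (W * Wᵀ).det := by
  rw [isUnit_iff_ne_zero]
  intro hdet
  obtain ⟨v, hv0, hv⟩ := (Matrix.exists_mulVec_eq_zero_iff).2 hdet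
  have hker : v ∈ LinearMap.ker (W * Wᵀ).mulVecLin := by
    rw [LinearMap.mem_ker, Matrix.mulVecLin_apply, hv]
  have hrank : (W * Wᵀ).rank = N := by rw [Matrix.rank_self_mul_transpose, h]
  have hrn := LinearMap.finrank_range_add_finrank_ker (W * Wᵀ).mulVecLin
  rw [Module.finrank_pi] at hrn
  have hre : Module.finrank ℝ (LinearMap.range (W * Wᵀ).mulVecLin) = N := hrank
  have hker0 : Module.finrank ℝ (LinearMap.ker (W * Wᵀ).mulVecLin) = 0 := by
    simp only [Fintype.card_fin] at hrn; omega
  rw [Submodule.finrank_eq_zero.1 hker0] at hker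
  exact hv0 (by simpa using hker)

noncomputable def mixMat {N j m : ℕ} (V : Matrix (Fin N) (Fin j) ℝ)
    (W : Matrix (Fin N) (Fin m) ℝ) : Matrix (Fin N) (Fin (j + m)) ℝ :=
  fun i c => if h : c.val < j then V i ⟨c.val, h⟩
    else W i ⟨c.val - j, by have := c.isLt; omega⟩

noncomputable def colmix {N j m : ℕ} (hj : j ≤ N) (V : Matrix (Fin N) (Fin j) ℝ)
    (W : Matrix (Fin N) (Fin m) ℝ) (ρ : Finset (Fin m)) (hρ : ρ.card = N - j) :
    Matrix (Fin N) (Fin N) ℝ :=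
  fun i c => if h : c.val < j then V i ⟨c.val, h⟩
    else W i (ρ.orderEmbOfFin hρ ⟨c.val - j, by have := c.isLt; omega⟩)

theorem mixMat_castAdd {N j m : ℕ} (V : Matrix (Fin N) (Fin j) ℝ)
    (W : Matrix (Fin N) (Fin m) ℝ) (i : Fin N) (x : Fin j) :
    mixMat V W i (Fin.castAdd m x) = V i x := by
  have hx : (Fin.castAdd m x).val < j := x.isLt
  rw [mixMat, dif_pos hx]
  congr 1

theorem mixMat_natAdd {N j m : ℕ} (V : Matrix (Fin N) (Fin j) ℝ)
    (W : Matrix (Fin N) (Fin m) ℝ) (i : Fin N) (x : Fin m) :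
    mixMat V W i (Fin.natAdd j x) = W i x := by
  have hx : ¬ (Fin.natAdd j x).val < j := by simp [Fin.natAdd]
  rw [mixMat, dif_neg hx]
  congr 1
  exact Fin.ext (by simp [Fin.natAdd])

theorem orderEmbOfFin_univ_fin {n : ℕ} (h : (Finset.univ : Finset (Fin n)).card = n)
    (x : Fin n) : Finset.univ.orderEmbOfFin h x = x := by
  have key := Finset.orderEmbOfFin_unique h (f := fun x : Fin n => x)
    (fun x => Finset.mem_univ x) strictMono_id
  exact (congrFun key x).symm

def wcount (j : ℕ) {A : ℕ} (S : Finset (Fin A)) : ℕ :=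
  (S.filter fun c => j ≤ c.val).card

theorem core {N j m : ℕ} (hj : j ≤ N) (V1 V2 : Matrix (Fin N) (Fin j) ℝ)
    (W : Matrix (Fin N) (Fin m) ℝ) (hG : IsUnit (W * Wᵀ).det) :
    (∑ ρ : {s : Finset (Fin m) // s.card = N - j},
      (colmix hj V1 W ρ.1 ρ.2).det * (colmix hj V2 W ρ.1 ρ.2).det)
    = (W * Wᵀ).det * (V1ᵀ * (W * Wᵀ)⁻¹ * V2).det := by
  classical
  set G := W * Wᵀ with hGdef
  let e₁ : Fin j ↪ Fin (j + m) := Fin.castLEEmb (Nat.le_add_right j m)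
  let e₂ : Fin m ↪ Fin (j + m) :=
    ⟨fun x => ⟨j + x.val, by have := x.isLt; omega⟩,
      fun x y h => by
        apply Fin.ext
        have h' : j + x.val = j + y.val := congrArg Fin.val h
        omega⟩
  have he₁ : StrictMono e₁ := by
    intro x y h; rw [Fin.lt_def] at h ⊢; exact h
  have he₂ : StrictMono e₂ := by
    intro x y h; rw [Fin.lt_def] at h ⊢
    exact Nat.add_lt_add_left h j
  have hsep : ∀ x y, e₁ x < e₂ y := by
    intro x y; rw [Fin.lt_def]
    exact Nat.lt_of_lt_of_le x.isLt (Nat.le_add_right j y.val)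
  -- abbreviations
  set dd : {s : Finset (Fin (j + m)) // s.card = N} → ℝ := fun S =>
    ((mixMat V1 W).submatrix id (S.1.orderEmbOfFin S.2)).det *
      ((mixMat V2 W).submatrix id (S.1.orderEmbOfFin S.2)).det with hdd
  -- pointwise Cauchy-Binet identity
  have hpoint : ∀ t : ℝ, 0 ≤ t →
      (V1 * V2ᵀ + t • G).det
        = ∑ S : {s : Finset (Fin (j + m)) // s.card = N}, dd S * t ^ wcount j S.1 := by
    intro t ht
    set sq := Real.sqrt t with hsq
    have hss : sq * sq = t := Real.mul_self_sqrt ht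
    set Dg : Matrix (Fin (j + m)) (Fin (j + m)) ℝ :=
      Matrix.diagonal (fun c => if j ≤ c.val then sq else 1) with hDg
    have hAB : (mixMat V1 W * Dg) * (mixMat V2 W * Dg)ᵀ = V1 * V2ᵀ + t • G := by
      ext i i'
      rw [Matrix.mul_apply]
      simp only [Matrix.transpose_apply, Matrix.mul_diagonal, hDg]
      rw [Fin.sum_univ_add]
      have h1 : ∀ x : Fin j,
          mixMat V1 W i (Fin.castAdd m x) *
              (if j ≤ (Fin.castAdd m x).val then sq else 1) *
            (mixMat V2 W i' (Fin.castAdd m x) *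
              (if j ≤ (Fin.castAdd m x).val then sq else 1))
          = V1 i x * V2 i' x := by
        intro x
        have hx : ¬ j ≤ (Fin.castAdd m x).val := by
          have := x.isLt
          simp only [Fin.coe_castAdd]
          omega
        rw [if_neg hx, mixMat_castAdd, mixMat_castAdd, mul_one, mul_one]
      have h2 : ∀ x : Fin m,
          mixMat V1 W i (Fin.natAdd j x) *
              (if j ≤ (Fin.natAdd j x).val then sq else 1) *
            (mixMat V2 W i' (Fin.natAdd j x) *
              (if j ≤ (Fin.natAdd j x).val then sq else 1))
          = t * (W i x * W i' x) := by
        intro x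
        have hx : j ≤ (Fin.natAdd j x).val := by
          simp only [Fin.coe_natAdd]
          omega
        rw [if_pos hx, mixMat_natAdd, mixMat_natAdd, ← hss]
        ring
      rw [Finset.sum_congr rfl fun x _ => h1 x, Finset.sum_congr rfl fun x _ => h2 x]
      rw [← Finset.mul_sum]
      rw [Matrix.add_apply, Matrix.smul_apply, smul_eq_mul, hGdef, Matrix.mul_apply,
        Matrix.mul_apply]
      simp only [Matrix.transpose_apply]
    rw [← hAB, cauchyBinet]
    refine Finset.sum_congr rfl fun S _ => ?_
    have hsub : ∀ (V : Matrix (Fin N) (Fin j) ℝ),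
        ((mixMat V W * Dg).submatrix id (S.1.orderEmbOfFin S.2))
          = (mixMat V W).submatrix id (S.1.orderEmbOfFin S.2) *
            Matrix.diagonal (fun c : Fin N =>
              if j ≤ (S.1.orderEmbOfFin S.2 c).val then sq else 1) := by
      intro V; ext i c
      simp [Matrix.mul_diagonal, Matrix.submatrix_apply, hDg]
    rw [hsub, hsub, Matrix.det_mul, Matrix.det_mul, Matrix.det_diagonal]
    have hprod : (∏ c : Fin N, if j ≤ (S.1.orderEmbOfFin S.2 c).val then sq else 1)
        = sq ^ wcount j S.1 := by
      rw [Finset.prod_ite, Finset.prod_const, Finset.prod_const, one_pow, mul_one, wcount]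
      rw [card_filter_orderEmb S.1 S.2 (fun c => j ≤ c.val)]
    rw [hprod]
    rw [hdd]
    have : sq ^ wcount j S.1 * sq ^ wcount j S.1 = t ^ wcount j S.1 := by
      rw [← mul_pow, hss]
    calc ((mixMat V1 W).submatrix id (S.1.orderEmbOfFin S.2)).det * sq ^ wcount j S.1 *
          (((mixMat V2 W).submatrix id (S.1.orderEmbOfFin S.2)).det * sq ^ wcount j S.1)
        = ((mixMat V1 W).submatrix id (S.1.orderEmbOfFin S.2)).det *
            ((mixMat V2 W).submatrix id (S.1.orderEmbOfFin S.2)).det *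
            (sq ^ wcount j S.1 * sq ^ wcount j S.1) := by ring
      _ = _ := by rw [this]
  -- polynomial identities
  set D : Matrix (Fin j) (Fin j) ℝ := V2ᵀ * G⁻¹ * V1 with hD
  set p : Polynomial ℝ :=
    ((Polynomial.C : ℝ →+* Polynomial ℝ).mapMatrix (V1 * V2ᵀ) +
      (Polynomial.X : Polynomial ℝ) • (Polynomial.C : ℝ →+* Polynomial ℝ).mapMatrix G).det
    with hp
  set χ : Polynomial ℝ :=
    ((Polynomial.X : Polynomial ℝ) • (1 : Matrix (Fin j) (Fin j) (Polynomial ℝ)) +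
      (Polynomial.C : ℝ →+* Polynomial ℝ).mapMatrix D).det with hχ
  have hpeval : ∀ t : ℝ, p.eval t = (V1 * V2ᵀ + t • G).det := by
    intro t
    rw [hp, show ∀ q : Polynomial ℝ, q.eval t = (Polynomial.evalRingHom t) q from fun _ => rfl,
      RingHom.map_det]
    congr 1
    ext i i'
    simp only [RingHom.mapMatrix_apply, Matrix.map_apply, Matrix.add_apply, Matrix.smul_apply,
      smul_eq_mul, Polynomial.coe_evalRingHom, Polynomial.eval_add, Polynomial.eval_mul,
      Polynomial.eval_X, Polynomial.eval_C]
  have hχeval : ∀ t : ℝ, χ.eval t = (t • (1 : Matrix (Fin j) (Fin j) ℝ) + D).det := by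
    intro t
    rw [hχ, show ∀ q : Polynomial ℝ, q.eval t = (Polynomial.evalRingHom t) q from fun _ => rfl,
      RingHom.map_det]
    congr 1
    ext i i'
    by_cases h : i = i' <;>
      simp only [RingHom.mapMatrix_apply, Matrix.map_apply, Matrix.add_apply, Matrix.smul_apply,
        smul_eq_mul, Polynomial.coe_evalRingHom, Polynomial.eval_add, Polynomial.eval_mul,
        Polynomial.eval_X, Polynomial.eval_C, Matrix.one_apply, if_pos, if_neg, h,
        if_true, if_false, mul_one, mul_zero, eq_self_iff_true, Polynomial.eval_zero,
        Polynomial.eval_one, ite_true, ite_false]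
  set r : Polynomial ℝ := ∑ S : {s : Finset (Fin (j + m)) // s.card = N},
    Polynomial.C (dd S) * (Polynomial.X : Polynomial ℝ) ^ wcount j S.1 with hr
  have hreval : ∀ t : ℝ, r.eval t = ∑ S : {s : Finset (Fin (j + m)) // s.card = N},
      dd S * t ^ wcount j S.1 := by
    intro t
    rw [hr, Polynomial.eval_finset_sum]
    refine Finset.sum_congr rfl fun S _ => ?_
    simp
  have hpr : p = r := by
    apply Polynomial.eq_of_infinite_eval_eq
    apply Set.Infinite.mono (s := Set.Ioi (0 : ℝ)) ?_ ?_
    · intro t ht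
      simp only [Set.mem_setOf_eq]
      rw [hpeval, hreval]
      exact hpoint t (le_of_lt ht)
    · exact Set.Ioi_infinite 0
  set q : Polynomial ℝ := Polynomial.C G.det *
    ((Polynomial.X : Polynomial ℝ) ^ (N - j) * χ) with hq
  have hchain : ∀ t : ℝ, t ≠ 0 →
      (V1 * V2ᵀ + t • G).det
        = G.det * (t ^ (N - j) * (t • (1 : Matrix (Fin j) (Fin j) ℝ) + D).det) := by
    intro t ht
    have h1 : V1 * V2ᵀ + t • G = G * (G⁻¹ * (V1 * V2ᵀ) + t • 1) := by
      rw [Matrix.mul_add, ← Matrix.mul_assoc, Matrix.mul_nonsing_inv _ hG, Matrix.one_mul,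
        Matrix.mul_smul, Matrix.mul_one]
    rw [h1, Matrix.det_mul]
    congr 1
    have h2 : G⁻¹ * (V1 * V2ᵀ) + t • (1 : Matrix (Fin N) (Fin N) ℝ)
        = t • ((1 : Matrix (Fin N) (Fin N) ℝ) + t⁻¹ • ((G⁻¹ * V1) * V2ᵀ)) := by
      rw [smul_add, smul_smul, mul_inv_cancel₀ ht, one_smul, ← Matrix.mul_assoc, add_comm]
    have h3 : (t • ((1 : Matrix (Fin j) (Fin j) ℝ) + t⁻¹ • D)).det
        = (t • (1 : Matrix (Fin j) (Fin j) ℝ) + D).det := by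
      congr 1
      rw [smul_add, smul_smul, mul_inv_cancel₀ ht, one_smul]
    rw [h2, Matrix.det_smul]
    have h4 : ((1 : Matrix (Fin N) (Fin N) ℝ) + t⁻¹ • ((G⁻¹ * V1) * V2ᵀ)).det
        = ((1 : Matrix (Fin j) (Fin j) ℝ) + t⁻¹ • D).det := by
      rw [← Matrix.smul_mul, Matrix.det_one_add_mul_comm, Matrix.mul_smul, ← Matrix.mul_assoc,
        ← hD]
    rw [h4, ← h3, Matrix.det_smul]
    simp only [Fintype.card_fin]
    rw [← mul_assoc (t ^ (N - j)), ← pow_add]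
    congr 2
    omega
  have hpq : p = q := by
    apply Polynomial.eq_of_infinite_eval_eq
    apply Set.Infinite.mono (s := Set.Ioi (0 : ℝ)) ?_ ?_
    · intro t ht
      simp only [Set.mem_setOf_eq]
      rw [hpeval, hq, Polynomial.eval_mul, Polynomial.eval_mul, Polynomial.eval_C,
        Polynomial.eval_pow, Polynomial.eval_X, hχeval]
      exact hchain t (ne_of_gt ht)
    · exact Set.Ioi_infinite 0
  -- coefficient extraction
  have hcq : q.coeff (N - j) = G.det * D.det := by
    rw [hq, Polynomial.coeff_C_mul]
    have h0 := Polynomial.coeff_X_pow_mul χ (N - j) 0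
    rw [zero_add] at h0
    rw [h0, Polynomial.coeff_zero_eq_eval_zero, hχeval]
    congr 2
    rw [zero_smul, zero_add]
  have hcr : r.coeff (N - j)
      = ∑ S : {s : Finset (Fin (j + m)) // s.card = N},
          if N - j = wcount j S.1 then dd S else 0 := by
    rw [hr, Polynomial.finset_sum_coeff]
    refine Finset.sum_congr rfl fun S _ => ?_
    rw [Polynomial.coeff_C_mul, Polynomial.coeff_X_pow, mul_ite, mul_one, mul_zero]
  -- the bijection between ρ's and S's with wcount j S.1 = N - j
  have hcardS : ∀ ρ : {s : Finset (Fin m) // s.card = N - j},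
      ((Finset.univ.map e₁ ∪ ρ.1.map e₂) : Finset (Fin (j + m))).card = N := by
    intro ρ
    rw [card_union_map e₁ e₂ hsep, Finset.card_univ, Fintype.card_fin, ρ.2]
    omega
  have hfilter : ∀ ρ : {s : Finset (Fin m) // s.card = N - j},
      ((Finset.univ.map e₁ ∪ ρ.1.map e₂).filter fun c => j ≤ c.val) = ρ.1.map e₂ := by
    intro ρ
    ext c
    simp only [Finset.mem_filter, Finset.mem_union, Finset.mem_map, Finset.mem_univ, true_and]
    constructor
    · rintro ⟨hc | hc, hcj⟩
      · obtain ⟨x, rfl⟩ := hc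
        exfalso
        have : (e₁ x).val = x.val := rfl
        have := x.isLt
        omega
      · exact hc
    · rintro ⟨x, hx, rfl⟩
      refine ⟨Or.inr ⟨x, hx, rfl⟩, ?_⟩
      have : (e₂ x).val = j + x.val := rfl
      omega
  have hmix : ∀ (V : Matrix (Fin N) (Fin j) ℝ) (ρ : Finset (Fin m)) (hρ : ρ.card = N - j)
      (hc : ((Finset.univ.map e₁ ∪ ρ.map e₂) : Finset (Fin (j + m))).card = N),
      (mixMat V W).submatrix id ((Finset.univ.map e₁ ∪ ρ.map e₂).orderEmbOfFin hc)
        = colmix hj V W ρ hρ := by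
    intro V ρ hρ hc
    ext i c
    rw [Matrix.submatrix_apply, id_eq,
      orderEmbOfFin_union_map hj e₁ e₂ he₁ he₂ hsep Finset.univ ρ
        (by rw [Finset.card_univ, Fintype.card_fin]) hρ hc c]
    by_cases h : c.val < j
    · rw [dif_pos h, orderEmbOfFin_univ_fin]
      have hval : (e₁ (⟨c.val, h⟩ : Fin j)).val < j := h
      rw [colmix, mixMat, dif_pos h, dif_pos hval]
      congr 1
    · rw [dif_neg h]
      have hval : ¬ (e₂ (ρ.orderEmbOfFin hρ ⟨c.val - j, by have := c.isLt; omega⟩)).val < j := by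
        have : (e₂ (ρ.orderEmbOfFin hρ ⟨c.val - j, by have := c.isLt; omega⟩)).val
            = j + (ρ.orderEmbOfFin hρ ⟨c.val - j, by have := c.isLt; omega⟩).val := rfl
        omega
      rw [colmix, mixMat, dif_neg h, dif_neg hval]
      congr 1
      apply Fin.ext
      simp only []
      have : (e₂ (ρ.orderEmbOfFin hρ ⟨c.val - j, by have := c.isLt; omega⟩)).val
          = j + (ρ.orderEmbOfFin hρ ⟨c.val - j, by have := c.isLt; omega⟩).val := rfl
      omega
  have hsum : (∑ ρ : {s : Finset (Fin m) // s.card = N - j},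
        (colmix hj V1 W ρ.1 ρ.2).det * (colmix hj V2 W ρ.1 ρ.2).det)
      = ∑ S : {s : Finset (Fin (j + m)) // s.card = N},
          if N - j = wcount j S.1 then dd S else 0 := by
    refine Finset.sum_bij_ne_zero
      (fun ρ _ _ => (⟨Finset.univ.map e₁ ∪ ρ.1.map e₂, hcardS ρ⟩ :
        {s : Finset (Fin (j + m)) // s.card = N}))
      (fun _ _ _ => Finset.mem_univ _) ?_ ?_ ?_
    · rintro ρ _ _ ρ' _ _ heq
      have h1 : ρ.1.map e₂ = ρ'.1.map e₂ := by
        rw [← hfilter ρ, ← hfilter ρ']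
        have h2 : (Finset.univ.map e₁ ∪ ρ.1.map e₂) = (Finset.univ.map e₁ ∪ ρ'.1.map e₂) :=
          congrArg Subtype.val heq
        rw [h2]
      exact Subtype.ext (Finset.map_injective e₂ h1)
    · intro S _ hSne
      have hwcS : N - j = wcount j S.1 := by
        by_contra hne
        exact hSne (if_neg hne)
      set ρS : Finset (Fin m) := Finset.univ.filter (fun x : Fin m => e₂ x ∈ S.1) with hρS
      have hmapρS : ρS.map e₂ = S.1.filter fun c => j ≤ c.val := by
        ext c
        simp only [Finset.mem_map, Finset.mem_filter, Finset.mem_univ, true_and, hρS]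
        constructor
        · rintro ⟨x, hx, rfl⟩
          exact ⟨hx, by have : (e₂ x).val = j + x.val := rfl; omega⟩
        · rintro ⟨hc, hcj⟩
          refine ⟨⟨c.val - j, by have := c.isLt; omega⟩, ?_, ?_⟩
          · have : e₂ (⟨c.val - j, by have := c.isLt; omega⟩ : Fin m) = c := by
              apply Fin.ext
              have : (e₂ (⟨c.val - j, by have := c.isLt; omega⟩ : Fin m)).val
                  = j + (c.val - j) := rfl
              omega
            rw [this]; exact hc
          · apply Fin.ext
            have : (e₂ (⟨c.val - j, by have := c.isLt; omega⟩ : Fin m)).val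
                = j + (c.val - j) := rfl
            omega
      have hρScard : ρS.card = N - j := by
        have hcm := congrArg Finset.card hmapρS
        rw [Finset.card_map] at hcm
        rw [wcount] at hwcS
        rw [hcm, ← hwcS]
      -- show S = union
      have hSfull : Finset.univ.map e₁ ∪ ρS.map e₂ = S.1 := by
        have hlow : S.1.filter (fun c => ¬ j ≤ c.val) = Finset.univ.map e₁ := by
          have hsubset : S.1.filter (fun c => ¬ j ≤ c.val) ⊆ Finset.univ.map e₁ := by
            intro c hcmem
            rw [Finset.mem_filter] at hcmem
            rw [Finset.mem_map]
            exact ⟨⟨c.val, by omega⟩, Finset.mem_univ _, Fin.ext rfl⟩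
          have hcards : (Finset.univ.map e₁ : Finset (Fin (j + m))).card
              ≤ (S.1.filter (fun c => ¬ j ≤ c.val)).card := by
            have hsplit := Finset.card_filter_add_card_filter_not
              (s := S.1) (p := fun c => j ≤ c.val)
            rw [Finset.card_map, Finset.card_univ, Fintype.card_fin]
            have h1 : (S.1.filter fun c => j ≤ c.val).card = N - j := hwcS.symm
            have h2 := S.2
            omega
          exact Finset.eq_of_subset_of_card_le hsubset hcards
        ext c
        by_cases hcj : j ≤ c.val
        · simp only [Finset.mem_union]
          constructor
          · rintro (hc | hc)
            · exfalso
              rw [Finset.mem_map] at hc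
              obtain ⟨x, _, rfl⟩ := hc
              have : (e₁ x).val = x.val := rfl
              have := x.isLt
              omega
            · rw [hmapρS, Finset.mem_filter] at hc
              exact hc.1
          · intro hc
            right
            rw [hmapρS, Finset.mem_filter]
            exact ⟨hc, hcj⟩
        · simp only [Finset.mem_union]
          constructor
          · rintro (hc | hc)
            · have : c ∈ S.1.filter (fun c => ¬ j ≤ c.val) := by rw [hlow]; exact hc
              rw [Finset.mem_filter] at this
              exact this.1
            · exfalso
              rw [Finset.mem_map] at hc
              obtain ⟨x, _, rfl⟩ := hc
              have : (e₂ x).val = j + x.val := rfl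
              omega
          · intro hc
            left
            rw [← hlow, Finset.mem_filter]
            exact ⟨hc, hcj⟩
      have hSeq : (⟨Finset.univ.map e₁ ∪ ρS.map e₂, hcardS ⟨ρS, hρScard⟩⟩ :
          {s : Finset (Fin (j + m)) // s.card = N}) = S := Subtype.ext hSfull
      have hkey : (colmix hj V1 W ρS hρScard).det * (colmix hj V2 W ρS hρScard).det = dd S := by
        rw [hdd, ← hSeq]
        simp only []
        rw [hmix V1 ρS hρScard, hmix V2 ρS hρScard]
      refine ⟨⟨ρS, hρScard⟩, Finset.mem_univ _, ?_, hSeq⟩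
      rw [hkey]
      rwa [if_pos hwcS] at hSne
    · intro ρ _ _
      rw [if_pos, hdd]
      · simp only []
        rw [hmix V1 ρ.1 ρ.2 (hcardS ρ), hmix V2 ρ.1 ρ.2 (hcardS ρ)]
      · rw [wcount]
        simp only []
        rw [hfilter ρ, Finset.card_map, ρ.2]
  rw [hsum, ← hcr, ← hpr, hpq, hcq]
  congr 1
  rw [hD, ← Matrix.det_transpose (V2ᵀ * G⁻¹ * V1), Matrix.transpose_mul, Matrix.transpose_mul,
    Matrix.transpose_transpose, Matrix.transpose_nonsing_inv]
  have hGsymm : Gᵀ = G := by rw [hGdef]; rw [Matrix.transpose_mul, Matrix.transpose_transpose]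
  rw [hGsymm, ← Matrix.mul_assoc]

theorem glue_Cmat {N L k j : ℕ} (hNL : N ≤ L) (hkL : k ≤ L)
    (hjN : j ≤ N)
    (U : Matrix (Fin N) (Fin L) ℝ)
    (σ : {s : Finset (Fin k) // s.card = j})
    (ρ : {s : Finset (Fin (L - k)) // s.card = N - j}) :
    (slaterEntry U fun p =>
        decide (p ∈ σ.1.map (Fin.castLEEmb hkL) ∪ ρ.1.map (shiftEmb k L)))
      = (colmix hjN
          ((leftBlock U k hkL).submatrix id (σ.1.orderEmbOfFin σ.2))
          (rightBlock U k) ρ.1 ρ.2).det := by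
  classical
  have he₁ : StrictMono (Fin.castLEEmb hkL) := by
    intro x y h; rw [Fin.lt_def] at h ⊢; exact h
  have he₂ : StrictMono (shiftEmb k L) := by
    intro x y h; rw [Fin.lt_def] at h ⊢
    have h' : (shiftEmb k L x).val = k + x.val := rfl
    have h'' : (shiftEmb k L y).val = k + y.val := rfl
    omega
  have hsep : ∀ (x : Fin k) (y : Fin (L - k)),
      Fin.castLEEmb hkL x < shiftEmb k L y := by
    intro x y; rw [Fin.lt_def]
    have h' : (Fin.castLEEmb hkL x).val = x.val := rfl
    have h'' : (shiftEmb k L y).val = k + y.val := rfl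
    have := x.isLt
    omega
  have hfilter : (Finset.univ.filter fun p =>
        (decide (p ∈ σ.1.map (Fin.castLEEmb hkL) ∪ ρ.1.map (shiftEmb k L))) = true)
      = σ.1.map (Fin.castLEEmb hkL) ∪ ρ.1.map (shiftEmb k L) := by
    ext x; simp
  have hcard : ((σ.1.map (Fin.castLEEmb hkL) ∪ ρ.1.map (shiftEmb k L)) :
      Finset (Fin L)).card = N := by
    rw [card_union_map _ _ hsep, σ.2, ρ.2]
    omega
  rw [slaterEntry]
  simp only [hfilter]
  rw [dif_pos hcard]
  congr 1
  ext i c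
  rw [Matrix.submatrix_apply, id_eq,
    orderEmbOfFin_union_map hjN (Fin.castLEEmb hkL) (shiftEmb k L) he₁ he₂ hsep
      σ.1 ρ.1 σ.2 ρ.2 hcard c]
  rw [colmix]
  by_cases h : c.val < j
  · rw [dif_pos h, dif_pos h]
    rfl
  · rw [dif_neg h, dif_neg h]
    rfl

end CmatAux

theorem Cmat_compound_formula {N L k j : ℕ} (hNL : N ≤ L) (hkL : k ≤ L)
    (hkLN : k ≤ L - N) (hjN : j ≤ N) (hjk : j ≤ k)
    (U : Matrix (Fin N) (Fin L) ℝ) (hU : U * Uᵀ = 1)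
    (hV : (leftBlock U k hkL).rank = min N k)
    (hW : (rightBlock U k).rank = min N (L - k)) :
    Cmat k hkL U j * (Cmat k hkL U j)ᵀ =
      (rightBlock U k * (rightBlock U k)ᵀ).det •
        compound j ((leftBlock U k hkL)ᵀ * (rightBlock U k * (rightBlock U k)ᵀ)⁻¹ *
          leftBlock U k hkL) := by
  classical
  have hNLk : N ≤ L - k := by omega
  have hWrank : (rightBlock U k).rank = N := by
    rw [hW, min_eq_left hNLk]
  have hGunit : IsUnit (rightBlock U k * (rightBlock U k)ᵀ).det :=
    CmatAux.isUnit_det_self_mul_transpose _ hWrank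
  ext σ τ
  rw [Matrix.mul_apply]
  have hterm : ∀ ρ : {s : Finset (Fin (L - k)) // s.card = N - j},
      Cmat k hkL U j σ ρ * (Cmat k hkL U j)ᵀ ρ τ
        = (CmatAux.colmix hjN
            ((leftBlock U k hkL).submatrix id (σ.1.orderEmbOfFin σ.2))
            (rightBlock U k) ρ.1 ρ.2).det *
          (CmatAux.colmix hjN
            ((leftBlock U k hkL).submatrix id (τ.1.orderEmbOfFin τ.2))
            (rightBlock U k) ρ.1 ρ.2).det := by
    intro ρ
    rw [Matrix.transpose_apply]
    rw [show Cmat k hkL U j σ ρ = slaterEntry U fun p =>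
        decide (p ∈ σ.1.map (Fin.castLEEmb hkL) ∪ ρ.1.map (shiftEmb k L)) from rfl]
    rw [show Cmat k hkL U j τ ρ = slaterEntry U fun p =>
        decide (p ∈ τ.1.map (Fin.castLEEmb hkL) ∪ ρ.1.map (shiftEmb k L)) from rfl]
    rw [CmatAux.glue_Cmat hNL hkL hjN U σ ρ, CmatAux.glue_Cmat hNL hkL hjN U τ ρ]
  rw [Finset.sum_congr rfl fun ρ _ => hterm ρ]
  rw [CmatAux.core hjN _ _ _ hGunit]
  have hfinal : ((leftBlock U k hkL).submatrix id (σ.1.orderEmbOfFin σ.2))ᵀ *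
      (rightBlock U k * (rightBlock U k)ᵀ)⁻¹ *
      (leftBlock U k hkL).submatrix id (τ.1.orderEmbOfFin τ.2)
      = ((leftBlock U k hkL)ᵀ * (rightBlock U k * (rightBlock U k)ᵀ)⁻¹ *
          leftBlock U k hkL).submatrix
          (σ.1.orderEmbOfFin σ.2) (τ.1.orderEmbOfFin τ.2) := by
    ext a b
    simp [Matrix.mul_apply, Finset.mul_sum, Finset.sum_mul]
  rw [Matrix.smul_apply, smul_eq_mul, hfinal]
  rfl
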